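/- If S ⊆ [n], |S| ≥ 2n/log n, U ⊆ [n] disjoint from S with |U| ≤ |S|, G is a graph on [n], T the vertex set of tree components of G − U − S, R the remaining vertices of G − U − S, and e(S,T) + e(S,R) > 2|S| − 2|U| + p where p is the number of tree components, and G[R] has at most 4n/log n components, then Σ_X ⌊e(X,S)/2⌋ > |S| − |U| − 2n/log n, where X ranges over components of G − U − S. -/

import Mathlib

open Real

/-- Number of edges of `G` with one endpoint in `A` and the other in `B`. -/
noncomputable def eBetween {V : Type*} (G : SimpleGraph V) (A B : Set V) : ℕ :=
  {e ∈ G.edgeSet | ∃ a ∈ A, ∃ b ∈ B, e = s(a, b)}.ncard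

/-- Number of edges of `G` with both endpoints in `A`. -/
noncomputable def eWithin {V : Type*} (G : SimpleGraph V) (A : Set V) : ℕ :=
  {e ∈ G.edgeSet | ∀ v ∈ e, v ∈ A}.ncard

/-- The vertex set (in `V`) of a connected component `K` of the subgraph of `G`
induced on `W`. -/
def compVerts {V : Type*} (G : SimpleGraph V) (W : Set V)
    (K : (G.induce W).ConnectedComponent) : Set V :=
  {v | ∃ h : v ∈ W, (G.induce W).connectedComponentMk ⟨v, h⟩ = K}

/-- A component is a tree component when its edge count is one less than its
vertex count. -/
def IsTreeComp {V : Type*} (G : SimpleGraph V) (W : Set V)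
    (K : (G.induce W).ConnectedComponent) : Prop :=
  eWithin G (compVerts G W K) + 1 = (compVerts G W K).ncard

lemma sum_ge_aux {V : Type*} [Fintype V] [DecidableEq V] (G : SimpleGraph V)
    (S W T R : Set V) (hTW : T ⊆ W) (hRW : R ⊆ W)
    (hTR : Disjoint T R) (hSR : Disjoint S R) :
    eBetween G S T + eBetween G S R ≤
      ∑ᶠ K : (G.induce W).ConnectedComponent, eBetween G (compVerts G W K) S := by
  classical
  haveI := Fintype.ofFinite ((G.induce W).ConnectedComponent)
  rw [finsum_eq_sum_of_fintype]
  set E : (G.induce W).ConnectedComponent → Finset (Sym2 V) := fun K =>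
    {e ∈ G.edgeSet | ∃ a ∈ compVerts G W K, ∃ b ∈ S, e = s(a, b)}.toFinset with hE
  have key : ∀ (A : Set V), A ⊆ W →
      {e ∈ G.edgeSet | ∃ a ∈ S, ∃ b ∈ A, e = s(a, b)}.toFinset ⊆
        Finset.univ.biUnion E := by
    intro A hAW e he
    rw [Set.mem_toFinset] at he
    obtain ⟨heE, a, ha, b, hb, rfl⟩ := he
    apply Finset.mem_biUnion.2
    refine ⟨(G.induce W).connectedComponentMk ⟨b, hAW hb⟩, Finset.mem_univ _, ?_⟩
    rw [hE]; rw [Set.mem_toFinset]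
    exact ⟨heE, b, ⟨hAW hb, rfl⟩, a, ha, Sym2.eq_swap⟩
  have hdisj : Disjoint {e ∈ G.edgeSet | ∃ a ∈ S, ∃ b ∈ T, e = s(a, b)}.toFinset
      {e ∈ G.edgeSet | ∃ a ∈ S, ∃ b ∈ R, e = s(a, b)}.toFinset := by
    rw [Finset.disjoint_left]
    intro e h1 h2
    rw [Set.mem_toFinset] at h1 h2
    obtain ⟨-, a, ha, b, hb, rfl⟩ := h1
    obtain ⟨-, a', ha', b', hb', he⟩ := h2
    rcases Sym2.eq_iff.1 he with ⟨rfl, rfl⟩ | ⟨rfl, rfl⟩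
    · exact hTR.ne_of_mem hb hb' rfl
    · exact hSR.ne_of_mem ha hb' rfl
  have hU : {e ∈ G.edgeSet | ∃ a ∈ S, ∃ b ∈ T, e = s(a, b)}.toFinset ∪
      {e ∈ G.edgeSet | ∃ a ∈ S, ∃ b ∈ R, e = s(a, b)}.toFinset ⊆
      Finset.univ.biUnion E :=
    Finset.union_subset (key T hTW) (key R hRW)
  calc eBetween G S T + eBetween G S R
      = ({e ∈ G.edgeSet | ∃ a ∈ S, ∃ b ∈ T, e = s(a, b)}.toFinset ∪
         {e ∈ G.edgeSet | ∃ a ∈ S, ∃ b ∈ R, e = s(a, b)}.toFinset).card := by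
        rw [Finset.card_union_of_disjoint hdisj, eBetween, eBetween,
          Set.ncard_eq_toFinset_card', Set.ncard_eq_toFinset_card']
    _ ≤ (Finset.univ.biUnion E).card := Finset.card_le_card hU
    _ ≤ ∑ K, (E K).card := Finset.card_biUnion_le
    _ = ∑ K : (G.induce W).ConnectedComponent, eBetween G (compVerts G W K) S := by
        refine Finset.sum_congr rfl fun K _ => ?_
        rw [eBetween, Set.ncard_eq_toFinset_card', hE]

lemma comp_count_aux {V : Type*} [Finite V] (G : SimpleGraph V) (W T R : Set V)
    (hT : T = ⋃ K ∈ {K : (G.induce W).ConnectedComponent | IsTreeComp G W K},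
      compVerts G W K)
    (hR : R = W \ T) :
    Nat.card ((G.induce W).ConnectedComponent) ≤
      Nat.card {K : (G.induce W).ConnectedComponent // IsTreeComp G W K} +
      Nat.card ((G.induce R).ConnectedComponent) := by
  classical
  have hRW : R ⊆ W := by rw [hR]; exact Set.diff_subset
  have hrep : ∀ K : {K : (G.induce W).ConnectedComponent // ¬ IsTreeComp G W K},
      ∃ v, v ∈ R ∧ v ∈ compVerts G W K.1 := by
    rintro ⟨K, hK⟩
    obtain ⟨v, hv⟩ := K.exists_rep
    refine ⟨v.1, ?_, v.2, hv⟩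
    rw [hR]
    refine ⟨v.2, fun hvT => hK ?_⟩
    rw [hT] at hvT
    simp only [Set.mem_iUnion] at hvT
    obtain ⟨K', hK', h, hmk⟩ := hvT
    have : K' = K := by rw [← hmk, ← hv]; rfl
    rwa [← this]
  choose f hfR hfC using hrep
  let φ : {K : (G.induce W).ConnectedComponent // ¬ IsTreeComp G W K} →
      (G.induce R).ConnectedComponent :=
    fun K => (G.induce R).connectedComponentMk ⟨f K, hfR K⟩
  have hφ : Function.Injective φ := by
    intro K₁ K₂ h
    have hreach : (G.induce R).Reachable ⟨f K₁, hfR K₁⟩ ⟨f K₂, hfR K₂⟩ :=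
      SimpleGraph.ConnectedComponent.exact h
    let ι : G.induce R →g G.induce W :=
      ⟨fun x => ⟨x.1, hRW x.2⟩, fun h => h⟩
    have hreachW := hreach.map ι
    have h1 := (hfC K₁).2
    have h2 := (hfC K₂).2
    have : K₁.1 = K₂.1 := by
      rw [← h1, ← h2]
      exact SimpleGraph.ConnectedComponent.sound hreachW
    exact Subtype.ext this
  have hinj := Nat.card_le_card_of_injective φ hφ
  have hsplit : Nat.card ((G.induce W).ConnectedComponent) ≤
      Nat.card {K : (G.induce W).ConnectedComponent // IsTreeComp G W K} +
      Nat.card {K : (G.induce W).ConnectedComponent // ¬ IsTreeComp G W K} := by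
    haveI := Fintype.ofFinite ((G.induce W).ConnectedComponent)
    haveI := Fintype.ofFinite {K : (G.induce W).ConnectedComponent // IsTreeComp G W K}
    haveI := Fintype.ofFinite {K : (G.induce W).ConnectedComponent // ¬ IsTreeComp G W K}
    simp only [Nat.card_eq_fintype_card]
    rw [Fintype.card_subtype_compl]
    have := Fintype.card_subtype_le (fun K : (G.induce W).ConnectedComponent => IsTreeComp G W K)
    omega
  omega

theorem stmt_15 (n : ℕ) (G : SimpleGraph (Fin n)) (S U : Set (Fin n))
    (hSU : Disjoint S U)
    (hSsize : 2 * n / Real.log n ≤ S.ncard)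
    (hUS : U.ncard ≤ S.ncard)
    -- the vertex set of `G - U - S`
    (W : Set (Fin n)) (hW : W = (S ∪ U)ᶜ)
    -- `T` is the vertex set of the tree components, `R` the rest
    (T : Set (Fin n))
    (hT : T = ⋃ K ∈ {K : (G.induce W).ConnectedComponent | IsTreeComp G W K},
      compVerts G W K)
    (R : Set (Fin n)) (hR : R = W \ T)
    -- `p` is the number of tree components
    (p : ℕ) (hp : p = Nat.card {K : (G.induce W).ConnectedComponent // IsTreeComp G W K})
    (hmany : (2 : ℝ) * S.ncard - 2 * U.ncard + p < eBetween G S T + eBetween G S R)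
    (hRcomp : (Nat.card ((G.induce R).ConnectedComponent) : ℝ) ≤ 4 * n / Real.log n) :
    (S.ncard : ℝ) - U.ncard - 2 * n / Real.log n <
      ∑ᶠ K : (G.induce W).ConnectedComponent, (eBetween G (compVerts G W K) S / 2 : ℕ) := by
  classical
  haveI := Fintype.ofFinite ((G.induce W).ConnectedComponent)
  have hTW : T ⊆ W := by
    rw [hT]
    refine Set.iUnion₂_subset fun K _ => fun v hv => hv.1
  have hRW : R ⊆ W := by rw [hR]; exact Set.diff_subset
  have hTR : Disjoint T R := by
    rw [hR]; exact Set.disjoint_sdiff_right.mono_left le_rfl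
  have hSR : Disjoint S R := by
    refine Set.disjoint_left.2 fun v hvS hvR => ?_
    have := hRW hvR
    rw [hW] at this
    exact this (Or.inl hvS)
  have h3 := sum_ge_aux G S W T R hTW hRW hTR hSR
  have h4 := comp_count_aux G W T R hT hR
  rw [finsum_eq_sum_of_fintype] at h3
  rw [finsum_eq_sum_of_fintype]
  -- pointwise floor bound
  have h5 : ∑ K : (G.induce W).ConnectedComponent, eBetween G (compVerts G W K) S ≤
      2 * (∑ K : (G.induce W).ConnectedComponent, eBetween G (compVerts G W K) S / 2) +
      Nat.card ((G.induce W).ConnectedComponent) := by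
    rw [Nat.card_eq_fintype_card, ← Finset.card_univ, Finset.mul_sum,
      Finset.card_eq_sum_ones, ← Finset.sum_add_distrib]
    refine Finset.sum_le_sum fun K _ => ?_
    omega
  -- cast to ℝ and conclude
  have hcast3 : ((eBetween G S T : ℝ) + eBetween G S R) ≤
      ∑ K : (G.induce W).ConnectedComponent, (eBetween G (compVerts G W K) S : ℝ) := by
    push_cast
    exact_mod_cast h3
  have hcast5 : (∑ K : (G.induce W).ConnectedComponent, (eBetween G (compVerts G W K) S : ℝ)) ≤
      2 * (∑ K : (G.induce W).ConnectedComponent, ((eBetween G (compVerts G W K) S / 2 : ℕ) : ℝ)) +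
      (Nat.card ((G.induce W).ConnectedComponent) : ℝ) := by
    exact_mod_cast h5
  have hcast4 : (Nat.card ((G.induce W).ConnectedComponent) : ℝ) ≤
      (p : ℝ) + (Nat.card ((G.induce R).ConnectedComponent) : ℝ) := by
    rw [hp]; exact_mod_cast h4
  have hhalf : (4 : ℝ) * n / Real.log n = 2 * (2 * n / Real.log n) := by ring
  push_cast
  linarith
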